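/- Define operators e_{s,n+1} x^{(β)} = q^{-Σ_{i=s+1}^{n} β_i}[β_s+1](Σ_{i=1}^{n} θ(ε_i,β)[β_i]) x^{(β+ε_s)} and e_{n+1,s} x^{(β)} = −q^{Σ_{i=s+1}^{n} β_i} x^{(β−ε_s)}. Then their commutator satisfies [e_{s,n+1}, e_{n+1,s}] x^{(β)} = [β_s + Σ_{i=1}^{n} β_i] x^{(β)}, i.e., it acts as (K − K^{-1})/(q−q^{-1}) where K x^{(β)} = q^{β_s + Σ_{i=1}^{n}β_i} x^{(β)}. -/

import Mathlib

open Finset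

/-- The quantum integer `[m] := (q^m - q^{-m})/(q - q^{-1})` for `m : ℤ`. -/
def qint {K : Type*} [Field K] (q : K) (m : ℤ) : K :=
  (q ^ m - q ^ (-m)) / (q - q⁻¹)

/-- `θ(ε_k, β) = q^{Σ_{s>k} β_s - Σ_{s<k} β_s}`. -/
def thq {K : Type*} [Field K] (q : K) (n : ℕ) (β : ℕ → ℤ) (k : ℕ) : K :=
  q ^ ((∑ s ∈ Finset.Icc (k + 1) n, β s) - ∑ s ∈ Finset.Ico 1 k, β s)

/-- The `i`-th standard basis vector `ε_i`. -/
def eps (i : ℕ) : ℕ → ℤ := fun k => if k = i then 1 else 0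

lemma qint_key {K : Type*} [Field K] (q : K) (hq0 : q ≠ 0) (a m : ℤ) :
    qint q (a + 1) * qint q m - qint q a * qint q (m - 1) = qint q (a + m) := by
  rcases eq_or_ne (q - q⁻¹) 0 with h | h
  · simp [qint, h]
  · have hu : (q : K) ^ a ≠ 0 := zpow_ne_zero _ hq0
    have hv : (q : K) ^ m ≠ 0 := zpow_ne_zero _ hq0
    unfold qint
    rw [div_mul_div_comm, div_mul_div_comm, div_sub_div_same,
      div_eq_div_iff (mul_ne_zero h h) h]
    simp only [zpow_add₀ hq0, zpow_sub₀ hq0, zpow_neg, zpow_one, neg_add, mul_inv]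
    generalize (q : K) ^ a = u at *
    generalize (q : K) ^ m = v at *
    field_simp
    ring_nf


lemma telescope {K : Type*} [Field K] (f : ℕ → K) (n : ℕ) :
    ∑ i ∈ Icc 1 n, (f i - f (i + 1)) = f 1 - f (n + 1) := by
  induction n with
  | zero => simp
  | succ n ih => rw [Finset.sum_Icc_succ_top (by omega), ih]; ring


lemma sum_thq_qint {K : Type*} [Field K] (q : K) (hq0 : q ≠ 0) (n : ℕ) (β : ℕ → ℤ) :
    ∑ i ∈ Icc 1 n, thq q n β i * qint q (β i) = qint q (∑ i ∈ Icc 1 n, β i) := by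
  set T := ∑ i ∈ Icc 1 n, β i with hT
  set f : ℕ → K := fun j => q ^ (T - 2 * ∑ t ∈ Ico 1 j, β t) / (q - q⁻¹) with hf
  have key : ∀ i ∈ Icc 1 n, thq q n β i * qint q (β i) = f i - f (i + 1) := by
    intro i hi
    rw [Finset.mem_Icc] at hi
    have hsplit : T = (∑ t ∈ Ico 1 i, β t) + (β i + ∑ t ∈ Icc (i + 1) n, β t) := by
      rw [hT, ← Finset.Ico_add_one_right_eq_Icc, ← Finset.sum_Ico_consecutive _ (by omega : 1 ≤ i)
        (by omega : i ≤ n + 1), Finset.sum_eq_sum_Ico_succ_bot (by omega : i < n + 1),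
        Finset.Ico_add_one_right_eq_Icc]
    have hG : ∑ t ∈ Ico 1 (i + 1), β t = (∑ t ∈ Ico 1 i, β t) + β i :=
      Finset.sum_Ico_succ_top (by omega) _
    set S1 := ∑ t ∈ Ico 1 i, β t with hS1
    set S2 := ∑ t ∈ Icc (i + 1) n, β t with hS2
    have e1 : S2 - S1 + β i = T - 2 * S1 := by linarith
    have e2 : S2 - S1 + -β i = T - 2 * (S1 + β i) := by linarith
    rw [thq, qint, hf]
    simp only
    rw [← mul_div_assoc, mul_sub, ← zpow_add₀ hq0, ← zpow_add₀ hq0, hG, ← hS1, ← hS2,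
      e1, e2, sub_div]
  rw [Finset.sum_congr rfl key, telescope, hf]
  simp only
  have h1 : ∑ t ∈ Ico 1 1, β t = 0 := by simp
  have h2 : ∑ t ∈ Ico 1 (n + 1), β t = T := by rw [hT, Finset.Ico_add_one_right_eq_Icc]
  rw [h1, h2, show T - 2 * 0 = T from by ring, show T - 2 * T = -T from by ring,
    qint, sub_div]


theorem e_s_nplus1_commutator {K V : Type*} [Field K] [AddCommGroup V] [Module K V]
    (q : K) (hq0 : q ≠ 0) (hq1 : q ≠ 1) (hqm : q ≠ -1) (n s : ℕ) (hs1 : 1 ≤ s) (hs2 : s ≤ n)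
    (X : (ℕ → ℤ) → V)
    (hX0 : ∀ β : ℕ → ℤ, (∃ k ∈ Finset.Icc 1 n, β k < 0) → X β = 0)
    (A B : Module.End K V)
    (hA : ∀ β : ℕ → ℤ, (∀ k ∈ Finset.Icc 1 n, 0 ≤ β k) →
      A (X β) = (q ^ (-(∑ i ∈ Finset.Icc (s + 1) n, β i)) * qint q (β s + 1) *
          ∑ i ∈ Finset.Icc 1 n, thq q n β i * qint q (β i)) • X (β + eps s))
    (hB : ∀ β : ℕ → ℤ, (∀ k ∈ Finset.Icc 1 n, 0 ≤ β k) →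
      B (X β) = -(q ^ (∑ i ∈ Finset.Icc (s + 1) n, β i)) • X (β - eps s)) :
    ∀ β : ℕ → ℤ, (∀ k ∈ Finset.Icc 1 n, 0 ≤ β k) →
      (A * B - B * A) (X β) = qint q (β s + ∑ i ∈ Finset.Icc 1 n, β i) • X β := by
  intro β hβ
  have hsmem : s ∈ Finset.Icc 1 n := Finset.mem_Icc.mpr ⟨hs1, hs2⟩
  set E := ∑ i ∈ Finset.Icc (s + 1) n, β i with hE
  set T := ∑ i ∈ Finset.Icc 1 n, β i with hT
  have hqE : (q : K) ^ E * q ^ (-E) = 1 := by rw [← zpow_add₀ hq0]; simp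
  -- sums over Icc (s+1) n don't see eps s
  have hEsub : ∑ i ∈ Finset.Icc (s + 1) n, (β - eps s) i = E := by
    rw [hE]; apply Finset.sum_congr rfl; intro i hi
    rw [Finset.mem_Icc] at hi
    simp only [Pi.sub_apply, eps]
    rw [if_neg (by omega)]; ring
  have hEadd : ∑ i ∈ Finset.Icc (s + 1) n, (β + eps s) i = E := by
    rw [hE]; apply Finset.sum_congr rfl; intro i hi
    rw [Finset.mem_Icc] at hi
    simp only [Pi.add_apply, eps]
    rw [if_neg (by omega)]; ring
  have hepsum : ∑ i ∈ Finset.Icc 1 n, eps s i = 1 := by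
    simp only [eps]
    rw [Finset.sum_ite_eq' (Finset.Icc 1 n) s (fun _ => (1 : ℤ)), if_pos hsmem]
  have hTsub : ∑ i ∈ Finset.Icc 1 n, (β - eps s) i = T - 1 := by
    simp only [Pi.sub_apply, Finset.sum_sub_distrib, hepsum, ← hT]
  have hcadd : β + eps s - eps s = β := by funext k; simp
  have hcsub : β - eps s + eps s = β := by funext k; simp
  have hβadd : ∀ k ∈ Finset.Icc 1 n, 0 ≤ (β + eps s) k := by
    intro k hk
    have := hβ k hk
    simp only [Pi.add_apply, eps]
    split <;> omega
  -- B on X β  and  B ∘ A part (common to both cases)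
  have hBA : B (A (X β)) =
      -(qint q (β s + 1) * qint q T) • X β := by
    rw [hA β hβ, map_smul, hB _ hβadd, hEadd, hcadd, sum_thq_qint q hq0, ← hT, smul_smul,
      ← hE]
    congr 1
    linear_combination (-(qint q (β s + 1) * qint q T)) * hqE
  have hsub_s : (β - eps s) s = β s - 1 := by simp [eps]
  simp only [LinearMap.sub_apply, Module.End.mul_apply]
  rw [hBA, hB β hβ, map_smul]
  rcases eq_or_lt_of_le (hβ s hsmem) with h0 | hpos
  · -- β s = 0 : X (β - eps s) = 0
    have hXz : X (β - eps s) = 0 := hX0 _ ⟨s, hsmem, by rw [hsub_s]; omega⟩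
    rw [hXz, map_zero, smul_zero, zero_sub, ← neg_smul, neg_neg]
    congr 1
    have hk := qint_key q hq0 (β s) T
    have hz : qint q (0 : ℤ) = 0 := by simp [qint]
    rw [← h0] at hk ⊢
    linear_combination hk + qint q (T - 1) * hz
  · -- β s ≥ 1
    have hβsub : ∀ k ∈ Finset.Icc 1 n, 0 ≤ (β - eps s) k := by
      intro k hk
      have := hβ k hk
      simp only [Pi.sub_apply, eps]
      split
      · next h => subst h; omega
      · omega
    rw [hA _ hβsub, hEsub, hcsub, sum_thq_qint q hq0, hTsub, hsub_s,
      show β s - 1 + 1 = β s from by ring, smul_smul, ← sub_smul]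
    congr 1
    have hk := qint_key q hq0 (β s) T
    linear_combination (-(qint q (β s)) * qint q (T - 1)) * hqE + hk
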